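/- arXiv:2410.11604 — 2 statements merged into one kernel-verified Lean document; each statement's English description precedes it below -/
import Mathlib

section
/- Unitary speed limit via Fisher information: if ρ evolves as dρ/dt = −(i/ℏ)[H, ρ] for Hermitian H, and X is any Hermitian operator, then |Tr[X dρ/dt]| ≤ (1/ℏ)·√(F_ρ(H))·√(V_ρ(X)), where F_ρ(H) is the SLD Fisher information and V_ρ(X) the variance of X in ρ. -/
open Matrix in
/-- SLD Fisher information in the eigenbasis of `ρ = ∑ p i |i⟩⟨i|`. -/
noncomputable def sldFisher {d : ℕ} (p : Fin d → ℝ) (H : Matrix (Fin d) (Fin d) ℂ) : ℝ :=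
  ∑ i, ∑ j, 2 * (p i - p j) ^ 2 / (p i + p j) * Complex.normSq (H i j)

open Matrix in
/-- Variance `V_ρ(X) = Tr[ρX²] − (Tr[ρX])²`. -/
noncomputable def qVar {d : ℕ} (ρ X : Matrix (Fin d) (Fin d) ℂ) : ℝ :=
  ((ρ * X * X).trace).re - (((ρ * X).trace).re) ^ 2

open Matrix Finset in
lemma trace_comm_formula {d : ℕ} (p : Fin d → ℝ) (H M : Matrix (Fin d) (Fin d) ℂ) :
    (M * (H * Matrix.diagonal (fun i => (p i : ℂ)) -
        Matrix.diagonal (fun i => (p i : ℂ)) * H)).trace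
      = ∑ i, ∑ j, M i j * H j i * ((p i : ℂ) - p j) := by
  have hpt : ∀ a b, (H * Matrix.diagonal (fun i => (p i : ℂ)) -
      Matrix.diagonal (fun i => (p i : ℂ)) * H) a b = H a b * ((p b : ℂ) - p a) := by
    intro a b
    simp [Matrix.sub_apply, Matrix.mul_diagonal, Matrix.diagonal_mul]
    ring
  simp only [Matrix.trace, Matrix.diag_apply, Matrix.mul_apply, hpt]
  congr 1; ext i; congr 1; ext j; ring

open Matrix Finset in
lemma trace_rho_sq {d : ℕ} (p : Fin d → ℝ) (M : Matrix (Fin d) (Fin d) ℂ)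
    (hM : M.IsHermitian) :
    ((Matrix.diagonal (fun i => (p i : ℂ)) * M * M).trace).re
      = ∑ i, ∑ j, p i * Complex.normSq (M i j) := by
  have key : ∀ i j, M j i = (starRingEnd ℂ) (M i j) := fun i j => (hM.apply j i).symm
  have hpt : ∀ a b, (Matrix.diagonal (fun i => (p i : ℂ)) * M) a b = (p a : ℂ) * M a b := by
    intro a b; simp [Matrix.diagonal_mul]
  simp only [Matrix.trace, Matrix.diag_apply, Matrix.mul_apply, hpt]
  rw [Complex.re_sum]
  congr 1; ext i
  rw [Complex.re_sum]
  congr 1; ext j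
  rw [key i j, mul_assoc, Complex.mul_conj]
  simp

open Matrix in
/-- Unitary speed limit via Fisher information: for the unitary time derivative
`dρ/dt = −(i/ℏ)[H,ρ]` (with `ρ = diagonal p` in its eigenbasis) and any
Hermitian `X`, `|Tr[X dρ/dt]| ≤ (1/ℏ)√(F_ρ(H))√(V_ρ(X))`. -/
theorem unitary_speed_limit {d : ℕ} (p : Fin d → ℝ)
    (hp : ∀ i, 0 < p i) (hsum : ∑ i, p i = 1)
    (H X : Matrix (Fin d) (Fin d) ℂ) (hH : H.IsHermitian) (hX : X.IsHermitian)
    (ℏ : ℝ) (hℏ : 0 < ℏ) :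
    ‖(X * ((-(Complex.I / (ℏ : ℂ))) •
        (H * Matrix.diagonal (fun i => (p i : ℂ)) -
          Matrix.diagonal (fun i => (p i : ℂ)) * H))).trace‖ ≤
      (1 / ℏ) * Real.sqrt (sldFisher p H) *
        Real.sqrt (qVar (Matrix.diagonal fun i => (p i : ℂ)) X) := by
  classical
  set ρ : Matrix (Fin d) (Fin d) ℂ := Matrix.diagonal (fun i => (p i : ℂ)) with hρ
  set c : ℝ := ((ρ * X).trace).re with hc
  set Y : Matrix (Fin d) (Fin d) ℂ := X - (c : ℂ) • 1 with hYdef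
  have hYH : Y.IsHermitian := by
    have h1 : ((c : ℂ) • (1 : Matrix (Fin d) (Fin d) ℂ)).IsHermitian := by
      simp [Matrix.IsHermitian, Matrix.conjTranspose_smul]
    exact hX.sub h1
  -- step 1: pull out scalar
  have h1 : (X * ((-(Complex.I / (ℏ : ℂ))) • (H * ρ - ρ * H))).trace
      = (-(Complex.I / (ℏ : ℂ))) * (X * (H * ρ - ρ * H)).trace := by
    rw [Matrix.mul_smul, Matrix.trace_smul, smul_eq_mul]
  have habs : ‖(-(Complex.I / (ℏ : ℂ)))‖ = 1 / ℏ := by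
    simp [norm_div, Complex.norm_real, abs_of_pos hℏ]
  -- step 2: replace X by Y in the sum
  have hXY : (X * (H * ρ - ρ * H)).trace = ∑ i, ∑ j, Y i j * H j i * ((p i : ℂ) - p j) := by
    rw [trace_comm_formula p H X]
    congr 1; ext i; congr 1; ext j
    by_cases hij : i = j
    · subst hij; simp
    · have : Y i j = X i j := by
        simp [hYdef, Matrix.sub_apply, Matrix.one_apply_ne hij]
      rw [this]
  -- the two CS factors
  set a : Fin d → Fin d → ℝ :=
    fun i j => Real.sqrt (2 * (p i - p j) ^ 2 / (p i + p j)) * ‖H j i‖ with ha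
  set b : Fin d → Fin d → ℝ :=
    fun i j => Real.sqrt ((p i + p j) / 2) * ‖Y i j‖ with hb
  have hs : ∀ i j, (0:ℝ) < p i + p j := fun i j => add_pos (hp i) (hp j)
  have hterm : ∀ i j, ‖Y i j * H j i * ((p i : ℂ) - p j)‖ = a i j * b i j := by
    intro i j
    have hcast : ((p i : ℂ) - p j) = ((p i - p j : ℝ) : ℂ) := by push_cast; ring
    have h0 : p i + p j ≠ 0 := (hs i j).ne'
    rw [hcast, norm_mul, norm_mul, Complex.norm_real, Real.norm_eq_abs]
    have hsqrt : Real.sqrt (2 * (p i - p j) ^ 2 / (p i + p j)) * Real.sqrt ((p i + p j) / 2)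
        = |p i - p j| := by
      rw [← Real.sqrt_mul (div_nonneg (by positivity) (hs i j).le)]
      rw [show 2 * (p i - p j) ^ 2 / (p i + p j) * ((p i + p j) / 2) = (p i - p j) ^ 2 by
        field_simp]
      exact Real.sqrt_sq_eq_abs _
    rw [ha, hb]
    dsimp only
    rw [mul_mul_mul_comm, hsqrt]
    ring
  -- Cauchy-Schwarz
  have hCS : ∑ i, ∑ j, a i j * b i j ≤
      Real.sqrt (∑ i, ∑ j, (a i j) ^ 2) * Real.sqrt (∑ i, ∑ j, (b i j) ^ 2) := by
    have key := Real.sum_mul_le_sqrt_mul_sqrt (Finset.univ : Finset (Fin d × Fin d))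
      (fun x => a x.1 x.2) (fun x => b x.1 x.2)
    have e1 : ∑ x : Fin d × Fin d, a x.1 x.2 * b x.1 x.2 = ∑ i, ∑ j, a i j * b i j := by
      rw [← Finset.univ_product_univ, Finset.sum_product]
    have e2 : ∑ x : Fin d × Fin d, (a x.1 x.2) ^ 2 = ∑ i, ∑ j, (a i j) ^ 2 := by
      rw [← Finset.univ_product_univ, Finset.sum_product]
    have e3 : ∑ x : Fin d × Fin d, (b x.1 x.2) ^ 2 = ∑ i, ∑ j, (b i j) ^ 2 := by
      rw [← Finset.univ_product_univ, Finset.sum_product]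
    rw [e1, e2, e3] at key
    exact key
  -- identify the Fisher sum
  have hF : ∑ i, ∑ j, (a i j) ^ 2 = sldFisher p H := by
    have : ∀ i j, (a i j) ^ 2 = 2 * (p i - p j) ^ 2 / (p i + p j) * Complex.normSq (H j i) := by
      intro i j
      rw [ha]; dsimp only
      rw [mul_pow, Real.sq_sqrt (div_nonneg (by positivity) (hs i j).le), Complex.sq_norm]
    simp only [this]
    rw [Finset.sum_comm, sldFisher]
    congr 1; ext i; congr 1; ext j
    ring_nf
  -- identify the variance sum
  have hVsum : ∑ i, ∑ j, (b i j) ^ 2 = ∑ i, ∑ j, p i * Complex.normSq (Y i j) := by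
    have hb2 : ∀ i j, (b i j) ^ 2 = (p i + p j) / 2 * Complex.normSq (Y i j) := by
      intro i j
      rw [hb]; dsimp only
      rw [mul_pow, Real.sq_sqrt (div_nonneg (hs i j).le (by norm_num)), Complex.sq_norm]
    have hnsymm : ∀ i j, Complex.normSq (Y j i) = Complex.normSq (Y i j) := by
      intro i j
      rw [← hYH.apply i j]
      simp [Complex.normSq_conj]
    have hswap : ∑ i, ∑ j, p j / 2 * Complex.normSq (Y i j)
        = ∑ i, ∑ j, p i / 2 * Complex.normSq (Y i j) := by
      rw [Finset.sum_comm]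
      congr 1; ext i; congr 1; ext j
      rw [hnsymm]
    simp only [hb2]
    have hsplit : ∀ i j, (p i + p j) / 2 * Complex.normSq (Y i j)
        = p i / 2 * Complex.normSq (Y i j) + p j / 2 * Complex.normSq (Y i j) := by
      intro i j; ring
    simp only [hsplit, Finset.sum_add_distrib]
    rw [hswap, ← Finset.sum_add_distrib]
    congr 1; ext i
    rw [← Finset.sum_add_distrib]
    congr 1; ext j
    ring
  have htrY : ((ρ * Y * Y).trace).re = ∑ i, ∑ j, p i * Complex.normSq (Y i j) :=
    trace_rho_sq p Y hYH
  -- variance identity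
  have hone : ρ.trace = 1 := by
    rw [hρ, Matrix.trace_diagonal]
    exact_mod_cast hsum
  have hexp : (ρ * Y * Y).trace = (ρ * X * X).trace
      - ((2 * c : ℝ) : ℂ) * (ρ * X).trace + ((c ^ 2 : ℝ) : ℂ) := by
    have hm : ρ * Y * Y = ρ * X * X - (c : ℂ) • (ρ * X) - (c : ℂ) • (ρ * X)
        + ((c : ℂ) ^ 2) • ρ := by
      rw [hYdef]
      simp only [Matrix.mul_sub, Matrix.sub_mul, Matrix.mul_smul, Matrix.smul_mul,
        mul_one, Matrix.mul_one, smul_smul, ← pow_two, smul_add, smul_sub]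
      abel
    rw [hm]
    simp only [Matrix.trace_add, Matrix.trace_sub, Matrix.trace_smul, hone, smul_eq_mul]
    push_cast
    ring
  have hqv : ((ρ * Y * Y).trace).re = qVar ρ X := by
    rw [hexp, qVar]
    simp only [Complex.add_re, Complex.sub_re, Complex.ofReal_re]
    rw [show (((2 * c : ℝ) : ℂ) * (ρ * X).trace).re = (2 * c) * ((ρ * X).trace).re from by
      rw [Complex.re_ofReal_mul]]
    rw [← hc]
    ring
  -- assemble
  rw [h1, norm_mul, habs, hXY]
  have hbound : ‖∑ i, ∑ j, Y i j * H j i * ((p i : ℂ) - p j)‖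
      ≤ Real.sqrt (sldFisher p H) * Real.sqrt (qVar ρ X) := by
    calc ‖∑ i, ∑ j, Y i j * H j i * ((p i : ℂ) - p j)‖
        ≤ ∑ i, ∑ j, ‖Y i j * H j i * ((p i : ℂ) - p j)‖ := by
          refine (norm_sum_le _ _).trans ?_
          exact Finset.sum_le_sum fun i _ => norm_sum_le _ _
      _ = ∑ i, ∑ j, a i j * b i j := by simp only [hterm]
      _ ≤ Real.sqrt (∑ i, ∑ j, (a i j) ^ 2) * Real.sqrt (∑ i, ∑ j, (b i j) ^ 2) := hCS
      _ = Real.sqrt (sldFisher p H) * Real.sqrt (qVar ρ X) := by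
          rw [hF, hVsum, ← htrY, hqv]
  calc (1 / ℏ) * ‖∑ i, ∑ j, Y i j * H j i * ((p i : ℂ) - p j)‖
      ≤ (1 / ℏ) * (Real.sqrt (sldFisher p H) * Real.sqrt (qVar ρ X)) := by
        exact mul_le_mul_of_nonneg_left hbound (by positivity)
    _ = (1 / ℏ) * Real.sqrt (sldFisher p H) * Real.sqrt (qVar ρ X) := by ring
end

section
/- Speed limit for currents in open quantum systems: suppose dρ_t/dt = −(i/ℏ)[H + H_D, ρ_t] + D_d[ρ_t], where D_d[ρ_t] = ∑_m (∑_{ω,α,n≠m} (W^{ω,α}_{mn} p_n − W^{−ω,α}_{nm} p_m)) |m⟩⟨m| in the eigenbasis ρ_t = ∑ p_n|n⟩⟨n|, with all W's positive. Then for any Hermitian X, |Tr[X dρ_t/dt]| ≤ (1/ℏ)√(F_{ρ_t}(H+H_D))√(V_{ρ_t}(X)) + √((1/2)·σ̇·M_X), where σ̇ := ∑'_{ω,α,n,m} W^{ω,α}_{mn}p_n ln(W^{ω,α}_{mn}p_n / (W^{−ω,α}_{nm}p_m)) is the entropy production rate and M_X := 4∑_{ω,α,n≠m} |⟨m|X|m⟩|²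 f(W^{ω,α}_{mn}p_n, W^{−ω,α}_{nm}p_m). -/
open scoped ComplexOrder

/-- The logarithmic mean, with `logMean a a = a`. -/
noncomputable def logMean (a b : ℝ) : ℝ :=
  if a = b then a else (a - b) / (Real.log a - Real.log b)

lemma logMean_pos {a b : ℝ} (ha : 0 < a) (hb : 0 < b) : 0 < logMean a b := by
  unfold logMean
  split_ifs with h
  · exact ha
  · rcases lt_or_gt_of_ne h with hlt | hgt
    · have : Real.log a < Real.log b := Real.log_lt_log ha hlt
      exact div_pos_of_neg_of_neg (by linarith) (by linarith)
    · have : Real.log b < Real.log a := Real.log_lt_log hb hgt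
      exact div_pos (by linarith) (by linarith)

lemma sq_div_logMean {a b : ℝ} (ha : 0 < a) (hb : 0 < b) :
    (a - b) ^ 2 / logMean a b = (a - b) * (Real.log a - Real.log b) := by
  unfold logMean
  split_ifs with h
  · simp [h]
  · have hlog : Real.log a ≠ Real.log b := fun he =>
      h (Real.log_injOn_pos (Set.mem_Ioi.2 ha) (Set.mem_Ioi.2 hb) he)
    have h2 : a - b ≠ 0 := sub_ne_zero.2 h
    have h3 : Real.log a - Real.log b ≠ 0 := sub_ne_zero.2 hlog
    field_simp

open Matrix in
/-- Speed limit for currents in open quantum systems. The jump labels `(ω,α)`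
form a finite type `J` with the involution `ι` implementing `ω ↦ −ω`; the rates
`W j m n` stand for `W^{ω,α}_{mn}`, the state is `ρ_t = diagonal p` in its
eigenbasis, and
`dρ_t/dt = −(i/ℏ)[H+H_D,ρ_t] + D_d[ρ_t]` with
`D_d[ρ_t] = ∑_m (∑_{j,n≠m} (W j m n p_n − W (ι j) n m p_m)) |m⟩⟨m|`. Then
`|Tr[X dρ_t/dt]| ≤ (1/ℏ)√F √V + √(σ̇ M_X / 2)`. -/
theorem current_speed_limit {d : ℕ} (p : Fin d → ℝ)
    (hp : ∀ i, 0 < p i) (hsum : ∑ i, p i = 1) (hnd : Function.Injective p)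
    (J : Type) [Fintype J] (ι : J → J) (hι : ∀ j, ι (ι j) = j)
    (W : J → Fin d → Fin d → ℝ) (hW : ∀ j m n, 0 < W j m n)
    (H HD X : Matrix (Fin d) (Fin d) ℂ)
    (hH : H.IsHermitian) (hHD : HD.IsHermitian) (hX : X.IsHermitian)
    (ℏ : ℝ) (hℏ : 0 < ℏ) :
    let ρ : Matrix (Fin d) (Fin d) ℂ := Matrix.diagonal fun n => (p n : ℂ)
    let Dd : Matrix (Fin d) (Fin d) ℂ := Matrix.diagonal fun m =>
      ((∑ j, ∑ n, if n = m then 0 else (W j m n * p n - W (ι j) n m * p m) : ℝ) : ℂ)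
    let ρ' : Matrix (Fin d) (Fin d) ℂ :=
      (-(Complex.I / (ℏ : ℂ))) • ((H + HD) * ρ - ρ * (H + HD)) + Dd
    let σdot : ℝ := ∑ j, ∑ n, ∑ m,
      if m = n then 0
      else W j m n * p n * Real.log (W j m n * p n / (W (ι j) n m * p m))
    let MX : ℝ := 4 * ∑ j, ∑ n, ∑ m,
      if n = m then 0
      else Complex.normSq (X m m) * logMean (W j m n * p n) (W (ι j) n m * p m)
    ‖(X * ρ').trace‖ ≤
      (1 / ℏ) * Real.sqrt (sldFisher p (H + HD)) * Real.sqrt (qVar ρ X) +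
        Real.sqrt ((1 / 2) * σdot * MX) := by
  intro ρ Dd ρ' σdot MX
  have hρ : ρ = Matrix.diagonal fun n => (p n : ℂ) := rfl
  set K : Matrix (Fin d) (Fin d) ℂ := H + HD with hKdef
  have hK : K.IsHermitian := hH.add hHD
  set D : Fin d → ℝ := fun m => ∑ j, ∑ n,
    if n = m then 0 else (W j m n * p n - W (ι j) n m * p m) with hDdef
  set c : ℝ := ((ρ * X).trace).re with hc
  -- real part facts
  have hXstar : ∀ m n, X n m = (starRingEnd ℂ) (X m n) := fun m n => (hX.apply n m).symm
  have hXre : ∀ m, (X m m).im = 0 := by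
    intro m
    have := hX.apply m m
    have h2 := congrArg Complex.im this
    simp [Complex.conj_im] at h2
    linarith
  -- ## trace decomposition
  set S : ℂ := ∑ m, ∑ n, X m n * K n m * ((p m : ℂ) - (p n : ℂ)) with hSdef
  have e1 : (X * (K * ρ)).trace = ∑ m, ∑ n, X m n * K n m * (p m : ℂ) := by
    rw [Matrix.trace]
    simp only [Matrix.diag, Matrix.mul_apply, hρ, Matrix.diagonal_apply, mul_ite, mul_zero,
      ite_mul, zero_mul, Finset.sum_ite_eq, Finset.sum_ite_eq', Finset.mem_univ, if_true]
    exact Finset.sum_congr rfl fun m _ => Finset.sum_congr rfl fun n _ => by ring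
  have e2 : (X * (ρ * K)).trace = ∑ m, ∑ n, X m n * K n m * (p n : ℂ) := by
    rw [Matrix.trace]
    simp only [Matrix.diag, Matrix.mul_apply, hρ, Matrix.diagonal_apply, mul_ite, mul_zero,
      ite_mul, zero_mul, Finset.sum_ite_eq, Finset.sum_ite_eq', Finset.mem_univ, if_true]
    exact Finset.sum_congr rfl fun m _ => Finset.sum_congr rfl fun n _ => by ring
  have trace_comm : (X * (K * ρ - ρ * K)).trace = S := by
    rw [Matrix.mul_sub, Matrix.trace_sub, e1, e2, hSdef]
    rw [← Finset.sum_sub_distrib]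
    refine Finset.sum_congr rfl fun m _ => ?_
    rw [← Finset.sum_sub_distrib]
    exact Finset.sum_congr rfl fun n _ => by ring
  have hDd : Dd = Matrix.diagonal fun m => ((D m : ℝ) : ℂ) := rfl
  have trace_Dd : (X * Dd).trace = ∑ m, X m m * ((D m : ℝ) : ℂ) := by
    rw [Matrix.trace]
    simp only [hDd, Matrix.diag, Matrix.mul_diagonal]
  have htr : (X * ρ').trace = (-(Complex.I / (ℏ : ℂ))) * S + ∑ m, X m m * ((D m : ℝ) : ℂ) := by
    have : X * ρ' = (-(Complex.I / (ℏ : ℂ))) • (X * (K * ρ - ρ * K)) + X * Dd := by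
      show X * ((-(Complex.I / (ℏ : ℂ))) • (K * ρ - ρ * K) + Dd) = _
      rw [Matrix.mul_add, Matrix.mul_smul]
    rw [this, Matrix.trace_add, Matrix.trace_smul, smul_eq_mul, trace_comm, trace_Dd]
  -- ## Part 1 : commutator bound
  have habsc : ‖-(Complex.I / (ℏ : ℂ))‖ = 1 / ℏ := by
    rw [norm_neg, norm_div, Complex.norm_I, Complex.norm_real, Real.norm_eq_abs, abs_of_pos hℏ]
  set q : Fin d → Fin d → ℝ := fun m n =>
    ‖if m = n then X m m - (c : ℂ) else X m n‖ with hqdef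
  have hqsym : ∀ m n, q m n = q n m := by
    intro m n
    by_cases h : m = n
    · subst h; rfl
    · simp only [hqdef, if_neg h, if_neg (Ne.symm h)]
      rw [hXstar m n]
      exact (Complex.norm_conj _).symm
  -- CS data for part 1
  set f1 : Fin d × Fin d → ℝ := fun t =>
    Real.sqrt (2 * (p t.1 - p t.2) ^ 2 / (p t.1 + p t.2)) * ‖K t.2 t.1‖ with hf1def
  set g1 : Fin d × Fin d → ℝ := fun t =>
    Real.sqrt ((p t.1 + p t.2) / 2) * q t.1 t.2 with hg1def
  have hsqrt_mul : ∀ m n : Fin d, Real.sqrt (2 * (p m - p n) ^ 2 / (p m + p n)) *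
      Real.sqrt ((p m + p n) / 2) = |p m - p n| := by
    intro m n
    have hs : 0 < p m + p n := by have := hp m; have := hp n; linarith
    rw [← Real.sqrt_mul (by positivity)]
    rw [show 2 * (p m - p n) ^ 2 / (p m + p n) * ((p m + p n) / 2) = (p m - p n) ^ 2 by
      field_simp]
    exact Real.sqrt_sq_eq_abs _
  have habsS : ‖S‖ ≤ ∑ t : Fin d × Fin d, f1 t * g1 t := by
    have step1 : ‖S‖ ≤
        ∑ m, ∑ n, ‖X m n‖ * ‖K n m‖ * |p m - p n| := by
      rw [hSdef]
      refine (norm_sum_le _ _).trans ?_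
      refine Finset.sum_le_sum fun m _ => ?_
      refine (norm_sum_le _ _).trans ?_
      refine Finset.sum_le_sum fun n _ => ?_
      rw [norm_mul, norm_mul]
      rw [show ((p m : ℂ) - (p n : ℂ)) = ((p m - p n : ℝ) : ℂ) by push_cast; ring,
        Complex.norm_real, Real.norm_eq_abs]
    refine step1.trans (le_of_eq ?_)
    rw [Fintype.sum_prod_type]
    refine Finset.sum_congr rfl fun m _ => Finset.sum_congr rfl fun n _ => ?_
    by_cases h : m = n
    · subst h
      simp [hf1def, hg1def]
    · simp only [hf1def, hg1def, hqdef, if_neg h]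
      rw [show Real.sqrt (2 * (p m - p n) ^ 2 / (p m + p n)) * ‖K n m‖ *
          (Real.sqrt ((p m + p n) / 2) * ‖X m n‖) =
          (Real.sqrt (2 * (p m - p n) ^ 2 / (p m + p n)) * Real.sqrt ((p m + p n) / 2)) *
          ‖K n m‖ * ‖X m n‖ by ring, hsqrt_mul]
      ring
  have hf1sq : ∑ t : Fin d × Fin d, f1 t ^ 2 = sldFisher p K := by
    rw [Fintype.sum_prod_type]
    have : ∀ m n : Fin d, f1 (m, n) ^ 2 =
        2 * (p m - p n) ^ 2 / (p m + p n) * Complex.normSq (K n m) := by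
      intro m n
      have hs : 0 < p m + p n := by have := hp m; have := hp n; linarith
      simp only [hf1def]
      rw [mul_pow, Real.sq_sqrt (by positivity), Complex.sq_norm]
    simp_rw [this]
    rw [Finset.sum_comm]
    unfold sldFisher
    exact Finset.sum_congr rfl fun i _ => Finset.sum_congr rfl fun j _ => by ring
  have hg1sq : ∑ t : Fin d × Fin d, g1 t ^ 2 = qVar ρ X := by
    have hc' : ∑ m, p m * (X m m).re = c := by
      have htrρX : (ρ * X).trace = ∑ m, (p m : ℂ) * X m m := by
        rw [Matrix.trace]
        simp only [hρ, Matrix.diag, Matrix.diagonal_mul]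
      rw [hc, htrρX, Complex.re_sum]
      exact Finset.sum_congr rfl fun m _ => (Complex.re_ofReal_mul _ _).symm
    have step0 : ∑ t : Fin d × Fin d, g1 t ^ 2 = ∑ m, ∑ n, (p m + p n) / 2 * q m n ^ 2 := by
      rw [Fintype.sum_prod_type]
      refine Finset.sum_congr rfl fun m _ => Finset.sum_congr rfl fun n _ => ?_
      have hs : 0 < p m + p n := by have := hp m; have := hp n; linarith
      simp only [hg1def]
      rw [mul_pow, Real.sq_sqrt (by positivity)]
    have swap : ∑ m, ∑ n, p n * q m n ^ 2 = ∑ m, ∑ n, p m * q m n ^ 2 := by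
      rw [Finset.sum_comm]
      exact Finset.sum_congr rfl fun n _ => Finset.sum_congr rfl fun m _ => by
        rw [hqsym]
    have step1 : ∑ m, ∑ n, (p m + p n) / 2 * q m n ^ 2 = ∑ m, ∑ n, p m * q m n ^ 2 := by
      have expand : ∑ m, ∑ n, (p m + p n) / 2 * q m n ^ 2 =
          (∑ m, ∑ n, p m * q m n ^ 2) / 2 + (∑ m, ∑ n, p n * q m n ^ 2) / 2 := by
        rw [Finset.sum_div, Finset.sum_div, ← Finset.sum_add_distrib]
        refine Finset.sum_congr rfl fun m _ => ?_
        rw [Finset.sum_div, Finset.sum_div, ← Finset.sum_add_distrib]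
        exact Finset.sum_congr rfl fun n _ => by ring
      rw [expand, swap]; ring
    have hq2 : ∀ m n, q m n ^ 2 = Complex.normSq (X m n) +
        (if m = n then c ^ 2 - 2 * c * (X m m).re else 0) := by
      intro m n
      by_cases h : m = n
      · subst h
        simp only [hqdef, if_pos rfl]
        rw [Complex.sq_norm]
        have him : (X m m).im = 0 := hXre m
        simp [Complex.normSq_apply, Complex.sub_re, Complex.sub_im, Complex.ofReal_re,
          Complex.ofReal_im, him]
        ring
      · simp [hqdef, h, Complex.sq_norm]
    have step2 : ∑ m, ∑ n, p m * q m n ^ 2 = qVar ρ X := by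
      have hVar : qVar ρ X = (∑ m, ∑ n, p m * Complex.normSq (X m n)) - c ^ 2 := by
        unfold qVar
        rw [← hc]
        congr 1
        have htr2 : (ρ * X * X).trace = ∑ m, ∑ n, ((p m * Complex.normSq (X m n) : ℝ) : ℂ) := by
          rw [Matrix.trace]
          simp only [hρ, Matrix.diag, Matrix.mul_apply, Matrix.diagonal_apply, ite_mul,
            zero_mul, mul_ite, mul_zero, Finset.sum_ite_eq, Finset.sum_ite_eq',
            Finset.mem_univ, if_true]
          refine Finset.sum_congr rfl fun m _ => Finset.sum_congr rfl fun n _ => ?_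
          rw [mul_assoc, hXstar m n, Complex.mul_conj]
          push_cast
          ring
        rw [htr2, Complex.re_sum]
        refine Finset.sum_congr rfl fun m _ => ?_
        rw [Complex.re_sum]
        exact Finset.sum_congr rfl fun n _ => Complex.ofReal_re _
      rw [hVar]
      simp_rw [hq2, mul_add, Finset.sum_add_distrib]
      have hite : ∀ m : Fin d, ∑ n, p m * (if m = n then c ^ 2 - 2 * c * (X m m).re else 0) =
          p m * (c ^ 2 - 2 * c * (X m m).re) := by
        intro m; simp
      simp_rw [hite]
      have : ∑ m, p m * (c ^ 2 - 2 * c * (X m m).re) = -c ^ 2 := by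
        have expand2 : ∑ m, p m * (c ^ 2 - 2 * c * (X m m).re) =
            (∑ m, p m) * c ^ 2 - 2 * c * ∑ m, p m * (X m m).re := by
          rw [Finset.sum_mul, Finset.mul_sum, ← Finset.sum_sub_distrib]
          exact Finset.sum_congr rfl fun m _ => by ring
        rw [expand2, hsum, hc']
        ring
      rw [this]
      ring
    rw [step0, step1, step2]
  have part1 : ‖(-(Complex.I / (ℏ : ℂ))) * S‖ ≤
      (1 / ℏ) * Real.sqrt (sldFisher p K) * Real.sqrt (qVar ρ X) := by
    rw [norm_mul, habsc, mul_assoc]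
    refine mul_le_mul_of_nonneg_left ?_ (by positivity)
    calc ‖S‖ ≤ ∑ t : Fin d × Fin d, f1 t * g1 t := habsS
      _ ≤ Real.sqrt (∑ t : Fin d × Fin d, f1 t ^ 2) *
          Real.sqrt (∑ t : Fin d × Fin d, g1 t ^ 2) :=
        Real.sum_mul_le_sqrt_mul_sqrt _ _ _
      _ = _ := by rw [hf1sq, hg1sq]
  -- ## Part 2 : dissipative bound
  set A : J × Fin d × Fin d → ℝ := fun t => W t.1 t.2.2 t.2.1 * p t.2.1 with hAdef
  set B : J × Fin d × Fin d → ℝ := fun t => W (ι t.1) t.2.1 t.2.2 * p t.2.2 with hBdef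
  have hApos : ∀ t, 0 < A t := fun t => mul_pos (hW _ _ _) (hp _)
  have hBpos : ∀ t, 0 < B t := fun t => mul_pos (hW _ _ _) (hp _)
  set f2 : J × Fin d × Fin d → ℝ := fun t =>
    if t.2.2 = t.2.1 then 0 else |A t - B t| / Real.sqrt (logMean (A t) (B t)) with hf2def
  set g2 : J × Fin d × Fin d → ℝ := fun t =>
    if t.2.2 = t.2.1 then 0 else
      ‖X t.2.2 t.2.2‖ * Real.sqrt (logMean (A t) (B t)) with hg2def
  have hLpos : ∀ t : J × Fin d × Fin d, 0 < logMean (A t) (B t) :=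
    fun t => logMean_pos (hApos t) (hBpos t)
  have hfg2 : ∀ t : J × Fin d × Fin d, f2 t * g2 t =
      if t.2.2 = t.2.1 then 0
      else ‖X t.2.2 t.2.2‖ * |A t - B t| := by
    intro t
    by_cases h : t.2.2 = t.2.1
    · simp [hf2def, hg2def, h]
    · simp only [hf2def, hg2def, if_neg h]
      have hL := hLpos t
      have hs : Real.sqrt (logMean (A t) (B t)) ≠ 0 := by positivity
      field_simp
  have hfg2' : ∀ (j : J) (n m : Fin d), f2 (j, n, m) * g2 (j, n, m) =
      if m = n then 0 else ‖X m m‖ *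
        |W j m n * p n - W (ι j) n m * p m| := by
    intro j n m
    simpa [hAdef, hBdef] using hfg2 (j, n, m)
  have habsT2 : ‖∑ m, X m m * ((D m : ℝ) : ℂ)‖ ≤
      ∑ t : J × Fin d × Fin d, f2 t * g2 t := by
    have step1 : ‖∑ m, X m m * ((D m : ℝ) : ℂ)‖ ≤
        ∑ m, ‖X m m‖ * |D m| := by
      refine (norm_sum_le _ _).trans (le_of_eq ?_)
      refine Finset.sum_congr rfl fun m _ => ?_
      rw [norm_mul, Complex.norm_real, Real.norm_eq_abs]
    have step2 : ∀ m, |D m| ≤ ∑ j, ∑ n,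
        |if n = m then (0:ℝ) else W j m n * p n - W (ι j) n m * p m| := by
      intro m
      rw [hDdef]
      refine (Finset.abs_sum_le_sum_abs _ _).trans ?_
      exact Finset.sum_le_sum fun j _ => Finset.abs_sum_le_sum_abs _ _
    have step3 : ∑ m, ‖X m m‖ * |D m| ≤
        ∑ m, ∑ j, ∑ n, (if n = m then 0
          else ‖X m m‖ * |W j m n * p n - W (ι j) n m * p m|) := by
      refine Finset.sum_le_sum fun m _ => ?_
      refine (mul_le_mul_of_nonneg_left (step2 m) (norm_nonneg _)).trans (le_of_eq ?_)
      rw [Finset.mul_sum]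
      refine Finset.sum_congr rfl fun j _ => ?_
      rw [Finset.mul_sum]
      refine Finset.sum_congr rfl fun n _ => ?_
      by_cases h : n = m <;> simp [h]
    have step4 : ∑ m, ∑ j, ∑ n, (if n = m then 0
          else ‖X m m‖ * |W j m n * p n - W (ι j) n m * p m|) =
        ∑ t : J × Fin d × Fin d, f2 t * g2 t := by
      have c1 : ∑ m, ∑ j, ∑ n, (if n = m then 0
            else ‖X m m‖ * |W j m n * p n - W (ι j) n m * p m|) =
          ∑ j : J, ∑ m : Fin d, ∑ n : Fin d, (if n = m then 0
            else ‖X m m‖ * |W j m n * p n - W (ι j) n m * p m|) :=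
        Finset.sum_comm
      have c2 : ∀ j : J, (∑ m : Fin d, ∑ n : Fin d, (if n = m then 0
            else ‖X m m‖ * |W j m n * p n - W (ι j) n m * p m|)) =
          ∑ n : Fin d, ∑ m : Fin d, (if n = m then 0
            else ‖X m m‖ * |W j m n * p n - W (ι j) n m * p m|) :=
        fun j => Finset.sum_comm
      rw [c1]
      rw [Fintype.sum_prod_type]
      refine Finset.sum_congr rfl fun j _ => ?_
      rw [c2 j, Fintype.sum_prod_type]
      refine Finset.sum_congr rfl fun n _ => Finset.sum_congr rfl fun m _ => ?_
      rw [hfg2' j n m]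
      by_cases h : n = m
      · simp [h]
      · rw [if_neg h, if_neg (fun he : m = n => h he.symm)]
    exact step1.trans (step3.trans (le_of_eq step4))
  have hf2sq : ∑ t : J × Fin d × Fin d, f2 t ^ 2 = 2 * σdot := by
    have hinv : Function.Involutive
        (fun t : J × Fin d × Fin d => (ι t.1, t.2.2, t.2.1)) := fun t => by
      simp [hι]
    set e : Equiv.Perm (J × Fin d × Fin d) := hinv.toPerm _ with hedef
    have hecoe : ∀ t : J × Fin d × Fin d, e t = (ι t.1, t.2.2, t.2.1) := fun t => rfl
    set h : J × Fin d × Fin d → ℝ := fun t =>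
      if t.2.2 = t.2.1 then 0 else A t * (Real.log (A t) - Real.log (B t)) with hhdef
    have hσdot : σdot = ∑ t : J × Fin d × Fin d, h t := by
      show (∑ j, ∑ n, ∑ m, if m = n then 0
        else W j m n * p n * Real.log (W j m n * p n / (W (ι j) n m * p m))) = _
      rw [Fintype.sum_prod_type]
      refine Finset.sum_congr rfl fun j _ => ?_
      rw [Fintype.sum_prod_type]
      refine Finset.sum_congr rfl fun n _ => Finset.sum_congr rfl fun m _ => ?_
      simp only [hhdef]
      by_cases hmn : m = n
      · simp [hmn]
      · rw [if_neg hmn, if_neg hmn]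
        rw [Real.log_div (mul_pos (hW j m n) (hp n)).ne' (mul_pos (hW (ι j) n m) (hp m)).ne']
    have hAe : ∀ t : J × Fin d × Fin d, A (e t) = B t := fun t => rfl
    have hBe : ∀ t : J × Fin d × Fin d, B (e t) = A t := by
      intro t
      show W (ι (ι t.1)) t.2.2 t.2.1 * p t.2.1 = _
      rw [hι]
    have hterm : ∀ t : J × Fin d × Fin d, f2 t ^ 2 = h t + h (e t) := by
      intro t
      by_cases hcnd : t.2.2 = t.2.1
      · have hcnd' : (e t).2.2 = (e t).2.1 := by
          rw [hecoe]
          exact hcnd.symm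
        simp [hf2def, hhdef, hcnd, hcnd']
      · have hcnd' : ¬ (e t).2.2 = (e t).2.1 := by
          rw [hecoe]
          exact fun he => hcnd (by exact he.symm)
        rw [hhdef]
        simp only [hf2def, if_neg hcnd, if_neg hcnd']
        rw [div_pow, sq_abs, Real.sq_sqrt (hLpos t).le, sq_div_logMean (hApos t) (hBpos t),
          hAe, hBe]
        ring
    simp_rw [hterm]
    rw [Finset.sum_add_distrib, Equiv.sum_comp e h, hσdot]
    ring
  have hg2sq : ∑ t : J × Fin d × Fin d, g2 t ^ 2 = MX / 4 := by
    have hMX : MX = 4 * ∑ j, ∑ n, ∑ m, if n = m then (0:ℝ)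
        else Complex.normSq (X m m) * logMean (W j m n * p n) (W (ι j) n m * p m) := rfl
    have : ∑ t : J × Fin d × Fin d, g2 t ^ 2 = ∑ j, ∑ n, ∑ m, if n = m then (0:ℝ)
        else Complex.normSq (X m m) * logMean (W j m n * p n) (W (ι j) n m * p m) := by
      rw [Fintype.sum_prod_type]
      refine Finset.sum_congr rfl fun j _ => ?_
      rw [Fintype.sum_prod_type]
      refine Finset.sum_congr rfl fun n _ => Finset.sum_congr rfl fun m _ => ?_
      have hg2' : g2 (j, n, m) = if m = n then 0 else ‖X m m‖ *
          Real.sqrt (logMean (W j m n * p n) (W (ι j) n m * p m)) := by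
        simp [hg2def, hAdef, hBdef]
      rw [hg2']
      by_cases hmn : m = n
      · simp [hmn]
      · rw [if_neg hmn, if_neg (fun he : n = m => hmn he.symm)]
        have hL : 0 < logMean (W j m n * p n) (W (ι j) n m * p m) :=
          logMean_pos (mul_pos (hW j m n) (hp n)) (mul_pos (hW (ι j) n m) (hp m))
        rw [mul_pow, Real.sq_sqrt hL.le, Complex.sq_norm]
    rw [this, hMX]
    ring
  have part2 : ‖∑ m, X m m * ((D m : ℝ) : ℂ)‖ ≤
      Real.sqrt ((1 / 2) * σdot * MX) := by
    calc ‖∑ m, X m m * ((D m : ℝ) : ℂ)‖ ≤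
        ∑ t : J × Fin d × Fin d, f2 t * g2 t := habsT2
      _ ≤ Real.sqrt (∑ t, f2 t ^ 2) * Real.sqrt (∑ t, g2 t ^ 2) :=
        Real.sum_mul_le_sqrt_mul_sqrt _ _ _
      _ = Real.sqrt ((∑ t, f2 t ^ 2) * (∑ t, g2 t ^ 2)) :=
        (Real.sqrt_mul (by positivity) _).symm
      _ = Real.sqrt ((1 / 2) * σdot * MX) := by rw [hf2sq, hg2sq]; congr 1; ring
  -- ## assemble
  calc ‖(X * ρ').trace‖
      = ‖(-(Complex.I / (ℏ : ℂ))) * S + ∑ m, X m m * ((D m : ℝ) : ℂ)‖ := by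
        rw [htr]
    _ ≤ ‖(-(Complex.I / (ℏ : ℂ))) * S‖ +
        ‖∑ m, X m m * ((D m : ℝ) : ℂ)‖ := norm_add_le _ _
    _ ≤ _ := add_le_add part1 part2
end
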